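/- Let K be a number field, let f : P^1 → P^1 be a rational map of degree d ≥ 2 defined over K, and let α ∈ P^1(K). If f is a power map, i.e. f is PGL_2(K̄)-conjugate to x^d or to x^{−d}, then the Minkowski dimension dim(G_{f,α}) exists and dim(G_{f,α}) = 0. -/

import Mathlib

open scoped Classical

noncomputable section

/-! ### Minkowski dimension machinery for groups of automorphisms of rooted trees

A rooted tree is presented by its levels `V 0, V 1, V 2, …` (with `V 0` the root level)
together with parent maps `V (n+1) → V n`.  An automorphism is a family of permutations
of the levels commuting with the parent maps; it is in particular determined by a point of
`∀ k, Equiv.Perm (V k)`.  The restriction `r_n σ` of `σ` to the height-`n` subtree is the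
tuple `(σ 0, …, σ n)`, and the natural metric is
`d(σ,τ) = inf { d!^{-(dⁿ-1)/(d-1)} : r_n σ = r_n τ }`. -/

/-- The exponent `(dⁿ - 1)/(d - 1) = 1 + d + ⋯ + d^(n-1)`. -/
def scaleExp (d n : ℕ) : ℕ := ∑ i ∈ Finset.range n, d ^ i

/-- The scale `ε_n = d!^{-(dⁿ-1)/(d-1)}`, i.e. `1/|Aut(Tₙᶜᵒᵐ)|`. -/
def treeScale (d n : ℕ) : ℝ := ((d.factorial : ℝ) ^ scaleExp d n)⁻¹

/-- Two families of level permutations restrict to the same automorphism of the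
height-`n` subtree. -/
def AgreeUpTo {V : ℕ → Type*} (n : ℕ) (σ τ : ∀ k, Equiv.Perm (V k)) : Prop :=
  ∀ k, k ≤ n → σ k = τ k

/-- The natural metric on automorphisms of a rooted `d`-ary tree:
`d(σ,τ) = inf { d!^{-(dⁿ-1)/(d-1)} : σ and τ agree on the height-n subtree }`. -/
def treeDist {V : ℕ → Type*} (d : ℕ) (σ τ : ∀ k, Equiv.Perm (V k)) : ℝ :=
  sInf {x : ℝ | ∃ n : ℕ, AgreeUpTo n σ τ ∧ x = treeScale d n}

/-- `N_{ε_n}(G)`: the least number of balls of radius `ε_n = treeScale d n` needed to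
cover `G`. -/
def coverNum {V : ℕ → Type*} (d : ℕ) (G : Set (∀ k, Equiv.Perm (V k))) (n : ℕ) : ℕ :=
  sInf {m : ℕ | ∃ s : Finset (∀ k, Equiv.Perm (V k)), s.card = m ∧
    G ⊆ ⋃ σ ∈ s, {τ | treeDist d σ τ ≤ treeScale d n}}

/-- The lower Minkowski dimension `liminf_{ε → 0} log N_ε(G) / log (1/ε)` (computed
along the scales `ε_n` of the metric). -/
def dimLower {V : ℕ → Type*} (d : ℕ) (G : Set (∀ k, Equiv.Perm (V k))) : ℝ :=
  Filter.liminf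
    (fun n : ℕ => Real.log (coverNum d G n : ℝ) / Real.log (1 / treeScale d n)) Filter.atTop

/-- The upper Minkowski dimension `limsup_{ε → 0} log N_ε(G) / log (1/ε)` (computed
along the scales `ε_n` of the metric). -/
def dimUpper {V : ℕ → Type*} (d : ℕ) (G : Set (∀ k, Equiv.Perm (V k))) : ℝ :=
  Filter.limsup
    (fun n : ℕ => Real.log (coverNum d G n : ℝ) / Real.log (1 / treeScale d n)) Filter.atTop

/-- The Minkowski dimension of `G` exists and equals `x`. -/
def HasDim {V : ℕ → Type*} (d : ℕ) (G : Set (∀ k, Equiv.Perm (V k))) (x : ℝ) : Prop :=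
  dimLower d G = x ∧ dimUpper d G = x

/-- `G` is closed for the natural metric. -/
def IsDistClosed {V : ℕ → Type*} (d : ℕ) (G : Set (∀ k, Equiv.Perm (V k))) : Prop :=
  ∀ σ, (∀ ε : ℝ, 0 < ε → ∃ τ ∈ G, treeDist d σ τ ≤ ε) → σ ∈ G

/-- The closure of `G` for the natural metric. -/
def distClosure {V : ℕ → Type*} (d : ℕ) (G : Set (∀ k, Equiv.Perm (V k))) :
    Set (∀ k, Equiv.Perm (V k)) :=
  {σ | ∀ ε : ℝ, 0 < ε → ∃ τ ∈ G, treeDist d σ τ ≤ ε}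

/-- `|r_n(G)|`: the cardinality of the restriction of `G` to the height-`n` subtree. -/
def levelCard {V : ℕ → Type*} (G : Set (∀ k, Equiv.Perm (V k))) (n : ℕ) : ℕ :=
  Nat.card ((fun (σ : ∀ k, Equiv.Perm (V k)) (k : Fin (n + 1)) => σ k.1) '' G)

end
noncomputable section

/-- A fixed algebraic closure `K̄` of `K`. -/
abbrev Kbar (K : Type*) [Field K] : Type _ := AlgebraicClosure K

/-- The level-`n` vertices of the preimage tree of `α` under `φ`: the set
`φ^{-n}(α)`. -/
abbrev preV {Pts : Type*} (φ : Pts → Pts) (α : Pts) (n : ℕ) : Type _ :=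
  {β : Pts // φ^[n] β = α}

/-- The parent map of the preimage tree: a vertex `β ∈ φ^{-(n+1)}(α)` is joined to
`φ(β) ∈ φ^{-n}(α)`. -/
def preParent {Pts : Type*} (φ : Pts → Pts) (α : Pts) (n : ℕ)
    (β : preV φ α (n + 1)) : preV φ α n :=
  ⟨φ β.1, by have h := β.2; rwa [Function.iterate_succ_apply] at h⟩

/-- The image `G_{φ,α}` of the arboreal Galois representation attached to `(φ, α)` over
the base field `L` (an intermediate field of `K̄/K`): the set of families of level
permutations of the preimage tree induced by elements of `Gal(K̄/L)`, acting on points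
via `act`. -/
def arbGal {K : Type*} [Field K] {Pts : Type*}
    (act : (Kbar K ≃ₐ[K] Kbar K) → Pts → Pts) (L : IntermediateField K (Kbar K))
    (φ : Pts → Pts) (α : Pts) : Set (∀ n, Equiv.Perm (preV φ α n)) :=
  {g | ∃ σ : Kbar K ≃ₐ[K] Kbar K, (∀ x ∈ L, σ x = x) ∧
    ∀ (n : ℕ) (β : preV φ α n), (g n β : Pts) = act σ (β : Pts)}

end
noncomputable section

/-- The projective line `ℙ¹(L) = L ∪ {∞}`, with `none` the point at infinity. -/
abbrev P1 (L : Type*) := Option L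

/-- The action on `ℙ¹(A)` of the rational map `f = p/q` with coefficients in `K`,
for an extension field `A` of `K`.  At a finite point `x` the value is `p(x)/q(x)`
(`∞` when `q(x) = 0`), and the value at `∞` is governed by the degrees of `p` and
`q` and their leading coefficients. -/
def ratAct {K : Type*} [Field K] (p q : Polynomial K)
    (A : Type*) [Field A] [Algebra K A] : P1 A → P1 A
  | some x =>
      if Polynomial.aeval x q = 0 then none
      else some (Polynomial.aeval x p / Polynomial.aeval x q)
  | none =>
      if q.natDegree < p.natDegree then none
      else if p.natDegree < q.natDegree then some 0
      else some (algebraMap K A (p.leadingCoeff / q.leadingCoeff))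

/-- The natural action of `Gal(K̄/K)` on `ℙ¹(K̄)`. -/
def galP1 {K : Type*} [Field K] (σ : Kbar K ≃ₐ[K] Kbar K) : P1 (Kbar K) → P1 (Kbar K) :=
  Option.map σ

/-- The inclusion `ℙ¹(K) ⊆ ℙ¹(K̄)`. -/
def P1K {K : Type*} [Field K] : P1 K → P1 (Kbar K) :=
  Option.map (algebraMap K (Kbar K))

/-- The set of `L`-rational points of `ℙ¹(K̄)`, for an intermediate field `L` of
`K̄/K`. -/
def P1Rat {K : Type*} [Field K] (L : IntermediateField K (Kbar K)) : Set (P1 (Kbar K)) :=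
  {β | β = none ∨ ∃ x ∈ L, β = some x}

/-- The Möbius transformation of `ℙ¹(F)` attached to `(a b; c e) ∈ PGL₂(F)`. -/
def moebius {F : Type*} [Field F] (a b c e : F) : P1 F → P1 F
  | some x => if c * x + e = 0 then none else some ((a * x + b) / (c * x + e))
  | none => if c = 0 then none else some (a / c)

/-- The normalizing constant `C_D = log(D!)/(D-1)`. -/
def Cconst (D : ℕ) : ℝ := Real.log (D.factorial : ℝ) / ((D : ℝ) - 1)

/-- The ramification multiplicity at a point `γ ∈ ℙ¹(A)` of the degree-`d` rational
map `f = p/q` with coefficients in `K ⊆ A`:  at a finite point `γ` with `f(γ) = c`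
finite it is the order of vanishing of `p - c·q` at `γ`; the cases involving `∞` are
handled using `q` and degrees.  A point is critical when this is at least `2`. -/
def multAt {K : Type*} [Field K] (p q : Polynomial K)
    (A : Type*) [Field A] [Algebra K A] (d : ℕ) : P1 A → ℕ
  | some x =>
      match ratAct p q A (some x) with
      | some c => ((p.map (algebraMap K A)) -
          Polynomial.C c * (q.map (algebraMap K A))).rootMultiplicity x
      | none => (q.map (algebraMap K A)).rootMultiplicity x
  | none =>
      match ratAct p q A none with
      | some c => d - ((p.map (algebraMap K A)) -
          Polynomial.C c * (q.map (algebraMap K A))).natDegree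
      | none => d - q.natDegree

end
noncomputable section AuxMetric
open Filter

variable {V : ℕ → Type*}

lemma treeScale_nonneg (d n : ℕ) : 0 ≤ treeScale d n := by
  unfold treeScale; positivity

lemma treeDist_le_of_agree {d n : ℕ} {σ τ : ∀ k, Equiv.Perm (V k)}
    (h : AgreeUpTo n σ τ) : treeDist d σ τ ≤ treeScale d n :=
  csInf_le ⟨0, fun x ⟨m, _, hx⟩ => hx ▸ treeScale_nonneg d m⟩ ⟨n, h, rfl⟩

lemma coverNum_bounds {d : ℕ} (n : ℕ) (G : Set (∀ k, Equiv.Perm (V k)))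
    (hne : G.Nonempty)
    (hfin : Finite ((fun (σ : ∀ k, Equiv.Perm (V k)) (k : Fin (n+1)) => σ k.1) '' G)) :
    1 ≤ coverNum d G n ∧
      coverNum d G n ≤
        Nat.card ((fun (σ : ∀ k, Equiv.Perm (V k)) (k : Fin (n+1)) => σ k.1) '' G) := by
  classical
  set r := fun (σ : ∀ k, Equiv.Perm (V k)) (k : Fin (n+1)) => σ k.1 with hr
  set I := r '' G with hI
  have hIfin : I.Finite := Set.finite_coe_iff.mp hfin
  have hrep : ∀ y ∈ hIfin.toFinset, ∃ g, g ∈ G ∧ r g = y := by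
    intro y hy
    rcases hIfin.mem_toFinset.mp hy with ⟨g, hg, hgy⟩
    exact ⟨g, hg, hgy⟩
  choose rep hrepG hrepr using hrep
  set s := hIfin.toFinset.attach.image (fun y => rep y.1 y.2) with hs
  have hcover : G ⊆ ⋃ σ ∈ s, {τ | treeDist d σ τ ≤ treeScale d n} := by
    intro τ hτ
    have hy : r τ ∈ hIfin.toFinset := hIfin.mem_toFinset.mpr ⟨τ, hτ, rfl⟩
    refine Set.mem_iUnion.mpr ⟨rep (r τ) hy, Set.mem_iUnion.mpr
      ⟨Finset.mem_image.mpr ⟨⟨_, hy⟩, Finset.mem_attach _ _, rfl⟩, ?_⟩⟩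
    refine treeDist_le_of_agree (fun k hk => ?_)
    have h2 := congrFun (hrepr (r τ) hy) ⟨k, Nat.lt_succ_of_le hk⟩
    simpa [hr] using h2
  have hmem : s.card ∈ {m : ℕ | ∃ s' : Finset (∀ k, Equiv.Perm (V k)), s'.card = m ∧
      G ⊆ ⋃ σ ∈ s', {τ | treeDist d σ τ ≤ treeScale d n}} := ⟨s, rfl, hcover⟩
  constructor
  · rw [Nat.one_le_iff_ne_zero]
    intro h0
    rcases (Nat.sInf_eq_zero.mp h0) with h0' | h0'
    · rcases h0' with ⟨s', hs0, hscov⟩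
      rcases hne with ⟨g, hg⟩
      have := hscov hg
      rw [Finset.card_eq_zero.mp hs0] at this
      simpa using this
    · exact absurd hmem (h0' ▸ Set.notMem_empty _)
  · calc coverNum d G n ≤ s.card := Nat.sInf_le hmem
      _ ≤ hIfin.toFinset.attach.card := Finset.card_image_le
      _ = hIfin.toFinset.card := Finset.card_attach
      _ = Nat.card I := by
          rw [Nat.card_coe_set_eq, Set.ncard_eq_toFinset_card _ hIfin]

end AuxMetric
noncomputable section AuxAnalysis
open Filter Real

lemma log_one_div_treeScale {d : ℕ} (n : ℕ) :
    Real.log (1 / treeScale d n) = (scaleExp d n : ℝ) * Real.log (d.factorial : ℝ) := by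
  rw [treeScale, one_div, inv_inv, Real.log_pow]

lemma scaleExp_ge {d : ℕ} (hd : 2 ≤ d) (m : ℕ) : 2 ^ m ≤ scaleExp d (m + 1) := by
  calc (2:ℕ) ^ m ≤ d ^ m := Nat.pow_le_pow_left hd m
    _ ≤ scaleExp d (m + 1) := Finset.single_le_sum (f := fun i => d ^ i)
        (fun i _ => Nat.zero_le _) (Finset.self_mem_range_succ m)

lemma hasDim_zero_of_bounds {V : ℕ → Type*} {d : ℕ} (hd : 2 ≤ d)
    (G : Set (∀ k, Equiv.Perm (V k))) (C : ℕ) (hC : 1 ≤ C)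
    (hcard : ∀ n : ℕ, 1 ≤ coverNum d G n ∧ coverNum d G n ≤ C * d ^ (n * (n + 2))) :
    HasDim d G 0 := by
  set f := fun n : ℕ => Real.log (coverNum d G n : ℝ) / Real.log (1 / treeScale d n) with hf
  set b := fun n : ℕ => (Real.log C + ((n * (n + 2) : ℕ) : ℝ) * Real.log d) *
      ((1/2 : ℝ) ^ n * (2 / Real.log 2)) with hb
  have hlog2 : (0:ℝ) < Real.log 2 := Real.log_pos (by norm_num)
  have hfact2 : (2:ℕ) ≤ d.factorial := le_trans hd (Nat.self_le_factorial d)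
  have hlogfact : Real.log 2 ≤ Real.log (d.factorial : ℝ) :=
    Real.log_le_log (by norm_num) (by exact_mod_cast hfact2)
  have hf0 : ∀ n, 0 ≤ f n := by
    intro n
    apply div_nonneg
    · exact Real.log_natCast_nonneg _
    · rw [log_one_div_treeScale]
      exact mul_nonneg (Nat.cast_nonneg _) (le_trans hlog2.le hlogfact)
  have hfb : ∀ n : ℕ, 1 ≤ n → f n ≤ b n := by
    intro n hn
    obtain ⟨m, rfl⟩ : ∃ m, n = m + 1 := ⟨n - 1, by omega⟩
    set n := m + 1
    have hnum : Real.log (coverNum d G n : ℝ) ≤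
        Real.log C + ((n * (n + 2) : ℕ) : ℝ) * Real.log d := by
      have h1 : Real.log (coverNum d G n : ℝ) ≤ Real.log ((C * d ^ (n * (n + 2)) : ℕ) : ℝ) := by
        apply Real.log_le_log
        · exact_mod_cast (hcard n).1
        · exact_mod_cast (hcard n).2
      refine h1.trans_eq ?_
      push_cast
      rw [Real.log_mul (by positivity) (by positivity), Real.log_pow]
      push_cast
      ring
    have hden : (2:ℝ) ^ m * Real.log 2 ≤ Real.log (1 / treeScale d n) := by
      rw [log_one_div_treeScale]
      apply mul_le_mul
      · exact_mod_cast scaleExp_ge hd m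
      · exact hlogfact
      · exact hlog2.le
      · exact Nat.cast_nonneg _
    have hden' : (0:ℝ) < (2:ℝ) ^ m * Real.log 2 := by positivity
    have hnum0 : 0 ≤ Real.log C + ((n * (n + 2) : ℕ) : ℝ) * Real.log d := by
      have : (0:ℝ) ≤ Real.log C := Real.log_natCast_nonneg _
      have : (0:ℝ) ≤ Real.log d := Real.log_natCast_nonneg _
      positivity
    have key : f n ≤ (Real.log C + ((n * (n + 2) : ℕ) : ℝ) * Real.log d) /
        ((2:ℝ) ^ m * Real.log 2) := div_le_div₀ hnum0 hnum hden' hden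
    refine key.trans_eq ?_
    rw [hb]
    show _ = _ * ((1/2 : ℝ) ^ (m+1) * (2 / Real.log 2))
    rw [div_eq_mul_inv]
    congr 1
    rw [pow_succ, one_div, inv_pow]
    field_simp
  have hbt : Tendsto b atTop (nhds 0) := by
    have h2 : Tendsto (fun n : ℕ => (Real.log C + ((n * (n + 2) : ℕ) : ℝ) * Real.log d) *
        ((1/2 : ℝ) ^ n)) atTop (nhds 0) := by
      have hA : Tendsto (fun n : ℕ => Real.log C * (1/2 : ℝ) ^ n) atTop (nhds 0) := by
        simpa using (tendsto_pow_atTop_nhds_zero_of_lt_one (by norm_num)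
          (by norm_num : (1/2:ℝ) < 1)).const_mul (Real.log C)
      have hB : Tendsto (fun n : ℕ => (((n:ℝ) ^ 2 + 2 * n) * (1/2 : ℝ) ^ n) * Real.log d)
          atTop (nhds 0) := by
        have h1 : Tendsto (fun n : ℕ => (n:ℝ) ^ 2 * (1/2 : ℝ) ^ n) atTop (nhds 0) :=
          tendsto_pow_const_mul_const_pow_of_lt_one 2 (by norm_num) (by norm_num)
        have h2' : Tendsto (fun n : ℕ => 2 * ((n:ℝ) * (1/2 : ℝ) ^ n)) atTop (nhds 0) := by
          simpa using (tendsto_self_mul_const_pow_of_lt_one (by norm_num : (0:ℝ) ≤ 1/2)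
            (by norm_num)).const_mul 2
        have := (h1.add h2').mul_const (Real.log d)
        simpa [add_mul, mul_assoc, mul_comm, mul_left_comm] using this
      have := hA.add hB
      simp only [add_zero] at this
      refine this.congr (fun n => ?_)
      push_cast
      ring
    have := h2.mul_const (2 / Real.log 2)
    simp only [zero_mul] at this
    refine this.congr (fun n => ?_)
    rw [hb]; ring
  have hft : Tendsto f atTop (nhds 0) := by
    apply tendsto_of_tendsto_of_tendsto_of_le_of_le' tendsto_const_nhds hbt
    · exact Eventually.of_forall hf0
    · exact eventually_atTop.mpr ⟨1, hfb⟩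
  exact ⟨hft.liminf_eq, hft.limsup_eq⟩

end AuxAnalysis
noncomputable section AuxAlgebra
open IntermediateField Polynomial

variable {K : Type*} [Field K]

lemma adjoin_root_step (E : IntermediateField K (Kbar K)) [FiniteDimensional K E]
    {x z' : Kbar K} {m : ℕ} (hm : 0 < m) (hz : z' ∈ E) (hx : x ^ m = z') :
    ∃ E' : IntermediateField K (Kbar K), ∃ _ : FiniteDimensional K E',
      E ≤ E' ∧ x ∈ E' ∧ Module.finrank K E' ≤ Module.finrank K E * m := by
  classical
  set P : Polynomial E := X ^ m - C (⟨z', hz⟩ : E) with hP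
  have hPmonic : P.Monic := monic_X_pow_sub_C _ hm.ne'
  have hPx : Polynomial.aeval x P = 0 := by
    simp only [hP, map_sub, map_pow, aeval_X, aeval_C]
    rw [hx]
    simp [IntermediateField.algebraMap_apply]
  have hint : IsIntegral E x := ⟨P, hPmonic, hPx⟩
  haveI : FiniteDimensional E E⟮x⟯ := IntermediateField.adjoin.finiteDimensional hint
  haveI hfd : FiniteDimensional K (IntermediateField.restrictScalars K E⟮x⟯) :=
    FiniteDimensional.trans K E E⟮x⟯
  refine ⟨IntermediateField.restrictScalars K E⟮x⟯, hfd, ?_, ?_, ?_⟩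
  · intro y hy
    exact (IntermediateField.mem_restrictScalars K).mpr
      (IntermediateField.algebraMap_mem E⟮x⟯ ⟨y, hy⟩)
  · exact (IntermediateField.mem_restrictScalars K).mpr
      (IntermediateField.mem_adjoin_simple_self E x)
  · have h1 : Module.finrank K (IntermediateField.restrictScalars K E⟮x⟯) =
        Module.finrank K E * Module.finrank E E⟮x⟯ :=
      (Module.finrank_mul_finrank K E E⟮x⟯).symm
    rw [h1]
    apply Nat.mul_le_mul_left
    rw [IntermediateField.adjoin.finrank hint]
    have hdeg : (minpoly E x).degree ≤ P.degree :=
      minpoly.degree_le_of_ne_zero E x hPmonic.ne_zero hPx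
    have hPdeg : P.natDegree = m := by
      rw [hP]; exact natDegree_X_pow_sub_C
    rw [← hPdeg]
    exact Polynomial.natDegree_le_natDegree hdeg

end AuxAlgebra
noncomputable section AuxMoebius

lemma moebius_left_inv {F : Type*} [Field F] {a b c e : F} (h : a * e - b * c ≠ 0) :
    ∀ x : P1 F, moebius e (-b) (-c) a (moebius a b c e x) = x := by
  intro x
  match x with
  | none =>
      by_cases hc : c = 0
      · simp [moebius, hc]
      · have h1 : -c * (a / c) + a = 0 := by field_simp; ring
        simp only [moebius, if_neg hc]
        rw [if_pos h1]
  | some t =>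
      by_cases hden : c * t + e = 0
      · have hc : c ≠ 0 := by
          rintro rfl
          simp only [zero_mul, zero_add] at hden
          rw [hden] at h
          simp at h
        simp only [moebius, if_pos hden]
        rw [if_neg (neg_ne_zero.mpr hc)]
        have h1 : e / -c = t := by
          rw [div_eq_iff (neg_ne_zero.mpr hc)]
          linear_combination hden
        rw [h1]
      · simp only [moebius, if_neg hden]
        set y := (a * t + b) / (c * t + e) with hy
        have hyv : y * (c * t + e) = a * t + b := div_mul_cancel₀ _ hden
        have h2 : -c * y + a ≠ 0 := by
          intro h0
          apply h
          have h3 : (-c * y + a) * (c * t + e) = 0 := by rw [h0]; ring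
          have h4 : -c * (y * (c * t + e)) + a * (c * t + e) = 0 := by
            rw [← h3]; ring
          rw [hyv] at h4
          linear_combination h4
        rw [if_neg h2]
        have h5 : (e * y + -b) / (-c * y + a) = t := by
          rw [div_eq_iff h2]
          have h6 : (e * y + -b) * (c * t + e) = t * (-c * y + a) * (c * t + e) := by
            have h7 : e * (y * (c * t + e)) + -b * (c * t + e) =
                t * (-c * (y * (c * t + e)) + a * (c * t + e)) := by
              rw [hyv]; ring
            linear_combination h7
          field_simp at h6
          linear_combination h6
        rw [h5]

lemma moebius_right_inv {F : Type*} [Field F] {a b c e : F} (h : a * e - b * c ≠ 0) :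
    ∀ x : P1 F, moebius a b c e (moebius e (-b) (-c) a x) = x := by
  have h' : e * a - -b * -c ≠ 0 := by intro h0; apply h; linear_combination h0
  intro x
  have h1 := moebius_left_inv h' x
  rw [neg_neg, neg_neg] at h1
  exact h1

end AuxMoebius
noncomputable section AuxPower
open Polynomial

variable {K : Type*} [Field K] {A : Type*} [Field A] [Algebra K A]

lemma ratAct_pow_some (d : ℕ) (t : A) :
    ratAct (X ^ d : Polynomial K) 1 A (some t) = some (t ^ d) := by
  simp [ratAct]

lemma ratAct_pow_none (d : ℕ) (hd : 0 < d) :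
    ratAct (X ^ d : Polynomial K) 1 A none = none := by
  simp only [ratAct, natDegree_one, natDegree_X_pow]
  rw [if_pos hd]

lemma ratAct_pow_iter_some (d k : ℕ) (t : A) :
    (ratAct (X ^ d : Polynomial K) 1 A)^[k] (some t) = some (t ^ d ^ k) := by
  induction k with
  | zero => simp
  | succ k ih =>
      rw [Function.iterate_succ_apply', ih, ratAct_pow_some, ← pow_mul, ← pow_succ]

lemma ratAct_inv_some (d : ℕ) {t : A} (ht : t ≠ 0) :
    ratAct (1 : Polynomial K) (X ^ d) A (some t) = some ((t ^ d)⁻¹) := by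
  simp [ratAct, pow_ne_zero d ht, one_div]

lemma ratAct_inv_iter (d : ℕ) (k : ℕ) {t : A} (ht : t ≠ 0) :
    ∃ s : A, (ratAct (1 : Polynomial K) (X ^ d) A)^[k] (some t) = some s ∧ s ≠ 0 ∧
      (s = t ^ d ^ k ∨ s = (t ^ d ^ k)⁻¹) := by
  induction k with
  | zero => exact ⟨t, rfl, ht, Or.inl (by simp)⟩
  | succ k ih =>
      obtain ⟨s, hs, hs0, hcase⟩ := ih
      refine ⟨(s ^ d)⁻¹, ?_, by simpa using pow_ne_zero d hs0, ?_⟩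
      · rw [Function.iterate_succ_apply', hs, ratAct_inv_some d hs0]
      · rcases hcase with h | h
        · right; rw [h, ← pow_mul, ← pow_succ]
        · left; rw [h, ← inv_pow, inv_inv, ← pow_mul, ← pow_succ]

lemma ratAct_inv_iter_degen (d : ℕ) (hd : 0 < d) (k : ℕ) {y : P1 A}
    (hy : y = none ∨ y = some 0) :
    (ratAct (1 : Polynomial K) (X ^ d) A)^[k] y = none ∨
      (ratAct (1 : Polynomial K) (X ^ d) A)^[k] y = some 0 := by
  induction k with
  | zero => simpa using hy
  | succ k ih =>
      rw [Function.iterate_succ_apply']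
      rcases ih with h | h <;> rw [h]
      · right
        simp only [ratAct, natDegree_one, natDegree_X_pow]
        rw [if_neg (by omega), if_pos hd]
      · left
        simp [ratAct, zero_pow hd.ne']
end AuxPower
theorem arboreal_power_maps_small {K : Type*} [Field K] [NumberField K] {d : ℕ}
    (hd : 2 ≤ d) (p q : Polynomial K) (hf : IsCoprime p q)
    (hdeg : max p.natDegree q.natDegree = d) (α : P1 K)
    (hpow : ∃ a b c e : Kbar K, a * e - b * c ≠ 0 ∧
      ((∀ x : P1 (Kbar K), moebius a b c e (ratAct p q (Kbar K) x) =
          ratAct (Polynomial.X ^ d : Polynomial K) 1 (Kbar K) (moebius a b c e x)) ∨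
        (∀ x : P1 (Kbar K), moebius a b c e (ratAct p q (Kbar K) x) =
          ratAct (1 : Polynomial K) (Polynomial.X ^ d) (Kbar K) (moebius a b c e x)))) :
    HasDim d (arbGal (K := K) galP1 ⊥ (ratAct p q (Kbar K)) (P1K α)) 0 := by
  classical
  obtain ⟨a, b, c, e, hdet, hcase⟩ := hpow
  set φ : P1 (Kbar K) → P1 (Kbar K) := ratAct p q (Kbar K) with hφdef
  set A : P1 (Kbar K) := P1K α with hAdef
  set G := arbGal (K := K) galP1 ⊥ φ A with hGdef
  have hne : G.Nonempty := by
    refine ⟨fun k => Equiv.refl _, (AlgEquiv.refl : Kbar K ≃ₐ[K] Kbar K),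
      fun x _ => rfl, fun m β => ?_⟩
    simp [galP1]
  have halg : ∀ x : Kbar K, IsIntegral K x := fun x =>
    (Algebra.IsAlgebraic.isAlgebraic x).isIntegral
  set F0 : IntermediateField K (Kbar K) := IntermediateField.adjoin K {a, b, c, e} with hF0def
  haveI : FiniteDimensional K F0 :=
    IntermediateField.finiteDimensional_adjoin (fun x _ => halg x)
  set C := Module.finrank K F0 with hCdef
  have hC1 : 1 ≤ C := Module.finrank_pos
  have haF0 : a ∈ F0 := IntermediateField.subset_adjoin _ _ (by simp)
  have hbF0 : b ∈ F0 := IntermediateField.subset_adjoin _ _ (by simp)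
  have hcF0 : c ∈ F0 := IntermediateField.subset_adjoin _ _ (by simp)
  have heF0 : e ∈ F0 := IntermediateField.subset_adjoin _ _ (by simp)
  set Z : Kbar K := (moebius a b c e A).getD 0 with hZdef
  have hZF0gen : ∀ w : P1 K, (moebius a b c e (P1K w)).getD 0 ∈ F0 := by
    intro w
    rcases w with _ | α0
    · by_cases hc : c = 0
      · simp only [P1K, Option.map_none, moebius, if_pos hc, Option.getD_none]
        exact zero_mem F0
      · simp only [P1K, Option.map_none, moebius, if_neg hc, Option.getD_some]
        exact div_mem haF0 hcF0
    · have hα0 : algebraMap K (Kbar K) α0 ∈ F0 := IntermediateField.algebraMap_mem F0 α0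
      by_cases hden : c * algebraMap K (Kbar K) α0 + e = 0
      · simp only [P1K, Option.map_some, moebius, if_pos hden, Option.getD_none]
        exact zero_mem F0
      · simp only [P1K, Option.map_some, moebius, if_neg hden, Option.getD_some]
        exact div_mem (add_mem (mul_mem haF0 hα0) hbF0) (add_mem (mul_mem hcF0 hα0) heF0)
  have hZF0 : Z ∈ F0 := hZF0gen α
  have hγex : ∀ k : ℕ, ∃ g : Kbar K, g ^ d ^ k = Z := fun k =>
    IsAlgClosed.exists_pow_nat_eq Z (pow_pos (by omega) k)
  choose γ hγ using hγex
  have hμν : ∀ x, moebius e (-b) (-c) a (moebius a b c e x) = x := moebius_left_inv hdet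
  apply hasDim_zero_of_bounds hd G C hC1
  intro n
  haveI : NeZero ((d ^ n : ℕ) : Kbar K) := ⟨Nat.cast_ne_zero.mpr (pow_ne_zero n (by omega))⟩
  haveI : NeZero (d ^ n) := ⟨pow_ne_zero n (by omega)⟩
  obtain ⟨ζ, hζ⟩ := HasEnoughRootsOfUnity.exists_primitiveRoot (Kbar K) (d ^ n)
  have chain : ∀ j : ℕ, j ≤ n + 1 → ∃ E : IntermediateField K (Kbar K),
      ∃ _ : FiniteDimensional K E, F0 ≤ E ∧ ζ ∈ E ∧ (∀ k < j, γ k ∈ E) ∧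
        Module.finrank K E ≤ (C * d ^ n) * (d ^ n) ^ j := by
    intro j
    induction j with
    | zero =>
        intro _
        obtain ⟨E, hFD, hle, hζE, hrank⟩ :=
          adjoin_root_step F0 (x := ζ) (z' := 1) (m := d ^ n)
            (pow_pos (by omega) n) (one_mem F0) hζ.pow_eq_one
        exact ⟨E, hFD, hle, hζE, fun k hk => absurd hk (Nat.not_lt_zero k), by simpa using hrank⟩
    | succ j ih =>
        intro hj
        obtain ⟨E, hFD, hle, hζE, hγE, hrank⟩ := ih (by omega)
        haveI := hFD
        obtain ⟨E', hFD', hle', hxE', hrank'⟩ :=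
          adjoin_root_step E (x := γ j) (z' := Z) (m := d ^ j)
            (pow_pos (by omega) j) (hle hZF0) (hγ j)
        refine ⟨E', hFD', le_trans hle hle', hle' hζE, ?_, ?_⟩
        · intro k hk
          rcases Nat.lt_succ_iff_lt_or_eq.mp hk with h | h
          · exact hle' (hγE k h)
          · subst h; exact hxE'
        · calc Module.finrank K E' ≤ Module.finrank K E * d ^ j := hrank'
            _ ≤ ((C * d ^ n) * (d ^ n) ^ j) * d ^ n :=
                Nat.mul_le_mul hrank (Nat.pow_le_pow_right (by omega) (by omega))
            _ = (C * d ^ n) * (d ^ n) ^ (j + 1) := by ring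
  obtain ⟨E, hFD, hleF0, hζE, hγE, hrank⟩ := chain (n + 1) le_rfl
  haveI := hFD
  have hrank' : Module.finrank K E ≤ C * d ^ (n * (n + 2)) := by
    refine hrank.trans (le_of_eq ?_)
    rw [← pow_mul, mul_assoc, ← pow_add]
    congr 2
    ring
  -- membership of preimage coordinates
  have hpoint : ∀ k, k ≤ n → ∀ x : Kbar K, φ^[k] (some x) = A → x ∈ E := by
    have hback0 : ∀ x : Kbar K, ∀ t : Kbar K,
        moebius a b c e (some x) = some t → t ∈ E → x ∈ E := by
      intro x t hμx htE
      have hback := hμν (some x)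
      rw [hμx] at hback
      by_cases hcnd : -c * t + a = 0
      · exfalso
        simp only [moebius, if_pos hcnd] at hback
        cases hback
      · simp only [moebius, if_neg hcnd, Option.some.injEq] at hback
        rw [← hback]
        exact div_mem (add_mem (mul_mem (hleF0 heF0) htE) (neg_mem (hleF0 hbF0)))
          (add_mem (mul_mem (neg_mem (hleF0 hcF0)) htE) (hleF0 haF0))
    have hback1 : ∀ x : Kbar K, moebius a b c e (some x) = none → x ∈ E := by
      intro x hμx
      have hback := hμν (some x)
      rw [hμx] at hback
      by_cases hc : (-c : Kbar K) = 0
      · simp [moebius, hc] at hback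
      · simp only [moebius, if_neg hc, Option.some.injEq] at hback
        rw [← hback]
        exact div_mem (hleF0 heF0) (neg_mem (hleF0 hcF0))
    have hroot : ∀ k, k ≤ n → ∀ t : Kbar K, t ≠ 0 → t ^ d ^ k = Z → t ∈ E := by
      intro k hk t ht0 htZ
      have hZne : Z ≠ 0 := htZ ▸ pow_ne_zero _ ht0
      have hγ0 : γ k ≠ 0 := by
        intro h0
        apply hZne
        rw [← hγ k, h0, zero_pow (pow_ne_zero k (by omega : d ≠ 0))]
      have hu1 : (t * (γ k)⁻¹) ^ d ^ n = 1 := by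
        have h1 : (t * (γ k)⁻¹) ^ d ^ k = 1 := by
          rw [mul_pow, inv_pow, hγ k, htZ, mul_inv_cancel₀ hZne]
        have h2 : d ^ n = d ^ k * d ^ (n - k) := by
          rw [← pow_add]
          congr 1
          omega
        rw [h2, pow_mul, h1, one_pow]
      obtain ⟨i, -, hui⟩ := hζ.eq_pow_of_pow_eq_one hu1
      have ht : t = ζ ^ i * γ k := by
        rw [hui]
        field_simp
      rw [ht]
      exact mul_mem (pow_mem hζE i) (hγE k (by omega))
    have hrootinv : ∀ k, k ≤ n → ∀ t : Kbar K, t ≠ 0 → Z ≠ 0 → t ^ d ^ k = Z⁻¹ → t ∈ E := by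
      intro k hk t ht0 hZne htZ
      have hγ0 : γ k ≠ 0 := by
        intro h0
        apply hZne
        rw [← hγ k, h0, zero_pow (pow_ne_zero k (by omega : d ≠ 0))]
      have hu1 : (t * γ k) ^ d ^ n = 1 := by
        have h1 : (t * γ k) ^ d ^ k = 1 := by
          rw [mul_pow, hγ k, htZ, inv_mul_cancel₀ hZne]
        have h2 : d ^ n = d ^ k * d ^ (n - k) := by
          rw [← pow_add]
          congr 1
          omega
        rw [h2, pow_mul, h1, one_pow]
      obtain ⟨i, -, hui⟩ := hζ.eq_pow_of_pow_eq_one hu1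
      have ht : t = ζ ^ i * (γ k)⁻¹ := by
        rw [hui]
        field_simp
      rw [ht]
      exact mul_mem (pow_mem hζE i) (inv_mem (hγE k (by omega)))
    rcases hcase with hsq | hinv
    · -- squaring case
      intro k hk x hx
      have hiter := (Function.Semiconj.iterate_right hsq k) (some x)
      rw [hx] at hiter
      rcases hμx : moebius a b c e (some x) with _ | t
      · exact hback1 x hμx
      · rw [hμx, ratAct_pow_iter_some] at hiter
        refine hback0 x t hμx ?_
        by_cases ht0 : t = 0
        · rw [ht0]; exact zero_mem E
        have hZt : t ^ d ^ k = Z := by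
          rw [hZdef, hiter]
          rfl
        exact hroot k hk t ht0 hZt
    · -- inversion case
      intro k hk x hx
      have hiter := (Function.Semiconj.iterate_right hinv k) (some x)
      rw [hx] at hiter
      rcases hμx : moebius a b c e (some x) with _ | t
      · exact hback1 x hμx
      · rw [hμx] at hiter
        refine hback0 x t hμx ?_
        by_cases ht0 : t = 0
        · rw [ht0]; exact zero_mem E
        obtain ⟨s, hs, hs0, hsc⟩ := ratAct_inv_iter (K := K) (A := Kbar K) d k ht0
        rw [hs] at hiter
        have hZs : Z = s := by
          rw [hZdef, hiter]
          rfl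
        rcases hsc with h | h
        · exact hroot k hk t ht0 (by rw [← h, ← hZs])
        · have hZne : Z ≠ 0 := hZs ▸ hs0
          refine hrootinv k hk t ht0 hZne ?_
          rw [hZs, h, inv_inv]
    -- end hpoint
  set r := fun (g : ∀ k0, Equiv.Perm (preV φ A k0)) (k0 : Fin (n + 1)) => g k0.1 with hrdef
  set I := r '' G with hIdef
  have hex : ∀ y : ↥I, ∃ σ : Kbar K ≃ₐ[K] Kbar K,
      ∀ (k0 : Fin (n + 1)) (β : preV φ A k0.1),
        ((y.1 k0 β : P1 (Kbar K))) = galP1 σ (β : P1 (Kbar K)) := by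
    intro y
    obtain ⟨g, hgG, hgy⟩ := y.2
    obtain ⟨σ, -, hσ⟩ := hgG
    refine ⟨σ, fun k0 β => ?_⟩
    have hyk : y.1 k0 = g k0.1 := by rw [← hgy]
    rw [hyk]
    exact hσ k0.1 β
  choose σf hσf using hex
  have hinj : Function.Injective (fun y : ↥I => (σf y).toAlgHom.comp E.val) := by
    intro y1 y2 hJ
    have hagree : ∀ w : Kbar K, w ∈ E → σf y1 w = σf y2 w := by
      intro w hw
      have := congrFun (congrArg DFunLike.coe hJ) ⟨w, hw⟩
      simpa using this
    apply Subtype.ext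
    funext k0
    apply Equiv.ext
    intro β
    have h1 := hσf y1 k0 β
    have h2 := hσf y2 k0 β
    have hval : galP1 (σf y1) (β : P1 (Kbar K)) = galP1 (σf y2) (β : P1 (Kbar K)) := by
      rcases hβ : (β : P1 (Kbar K)) with _ | xβ
      · rfl
      · have hβ2 : φ^[k0.1] (some xβ) = A := by rw [← hβ]; exact β.2
        have hxE : xβ ∈ E := hpoint k0.1 (Nat.lt_succ_iff.mp k0.2) xβ hβ2
        show Option.map _ _ = Option.map _ _
        simp only [Option.map_some]
        rw [hagree xβ hxE]
    exact Subtype.ext (h1.trans (hval.trans h2.symm))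
  haveI hIfin : Finite ↥I := Finite.of_injective _ hinj
  have hcard1 : Nat.card ↥I ≤ Nat.card (↥E →ₐ[K] Kbar K) :=
    Nat.card_le_card_of_injective _ hinj
  have hcard2 : Nat.card (↥E →ₐ[K] Kbar K) = Module.finrank K E := by
    rw [Nat.card_eq_fintype_card]
    exact AlgHom.card K (↥E) (Kbar K)
  obtain ⟨h1, h2⟩ := coverNum_bounds (d := d) n G hne hIfin
  exact ⟨h1, h2.trans ((hcard1.trans (hcard2 ▸ hrank')))⟩
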